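/- (Theorem 1, equation (5).) H·(1 − Σ_{n≥2} t_n·(S + S² + ⋯ + S^{n−1})) = 1, where the sum is the tsum of the summable family (t_n·Σ_{k=1}^{n−1} S^k)_{n≥2}. -/

import Mathlib

/- `R = MvPowerSeries ℕ ℚ`, with the product (coefficientwise) topology. -/
noncomputable instance : TopologicalSpace (MvPowerSeries ℕ ℚ) :=
  inferInstanceAs (TopologicalSpace ((ℕ →₀ ℕ) → ℚ))

open MvPowerSeries

instance : T2Space (MvPowerSeries ℕ ℚ) :=
  inferInstanceAs (T2Space ((ℕ →₀ ℕ) → ℚ))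

instance : IsTopologicalAddGroup (MvPowerSeries ℕ ℚ) :=
  inferInstanceAs (IsTopologicalAddGroup ((ℕ →₀ ℕ) → ℚ))

instance : NoZeroDivisors (MvPowerSeries ℕ ℚ) := by
  have h : NoZeroDivisors (MvPowerSeries ℕᵒᵈ ℚ) := by
    constructor
    intro a b hab
    have hl := MvPowerSeries.lexOrder_mul (σ := ℕᵒᵈ) (R := ℚ) a b
    rw [hab, MvPowerSeries.lexOrder_zero] at hl
    rcases WithTop.add_eq_top.mp hl.symm with h1 | h1
    · exact Or.inl ((MvPowerSeries.lexOrder_eq_top_iff_eq_zero a).mp h1)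
    · exact Or.inr ((MvPowerSeries.lexOrder_eq_top_iff_eq_zero b).mp h1)
  exact h

lemma hasSum_coeff_iff {f : ℕ → MvPowerSeries ℕ ℚ} {s : MvPowerSeries ℕ ℚ} :
    HasSum f s ↔ ∀ d : ℕ →₀ ℕ, HasSum (fun n => coeff d (f n)) (coeff d s) :=
  Pi.hasSum

lemma coeff_X_mul_eq_zero {m : ℕ} {g : MvPowerSeries ℕ ℚ} {d : ℕ →₀ ℕ} (hd : d m = 0) :
    coeff d ((X m : MvPowerSeries ℕ ℚ) * g) = 0 :=
  X_dvd_iff.mp (dvd_mul_right _ _) d hd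

lemma summable_aux (j : ℕ) (g : ℕ → MvPowerSeries ℕ ℚ) :
    Summable (fun n => (X (n + j) : MvPowerSeries ℕ ℚ) * g n) := by
  classical
  refine ⟨@id (MvPowerSeries ℕ ℚ) fun d => ∑ n ∈ Finset.range (d.support.sup id + 1),
    coeff d ((X (n + j) : MvPowerSeries ℕ ℚ) * g n), ?_⟩
  rw [hasSum_coeff_iff]
  intro d
  apply hasSum_sum_of_ne_finset_zero (s := Finset.range (d.support.sup id + 1))
  intro n hn
  apply coeff_X_mul_eq_zero
  rw [← Finsupp.notMem_support_iff]
  intro hmem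
  have h := Finset.le_sup (f := id) hmem
  simp only [id_eq] at h
  simp only [Finset.mem_range] at hn
  omega

lemma hasSum_mul_left_mvps (a : MvPowerSeries ℕ ℚ) {f : ℕ → MvPowerSeries ℕ ℚ}
    {s : MvPowerSeries ℕ ℚ} (h : HasSum f s) :
    HasSum (fun n => a * f n) (a * s) := by
  rw [hasSum_coeff_iff] at h ⊢
  intro d
  have H : ∀ p ∈ Finset.HasAntidiagonal.antidiagonal d,
      HasSum (fun n => coeff p.1 a * coeff p.2 (f n)) (coeff p.1 a * coeff p.2 s) :=
    fun p _ => (h p.2).mul_left _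
  have := hasSum_sum H
  simpa [coeff_mul] using this

/-- (Theorem 1, equation (5).) `H · (1 − ∑_{n ≥ 2} t_n · (S + S² + ⋯ + S^{n-1})) = 1`,
where the sum is the tsum of the family `(t_n · ∑_{k=1}^{n-1} S^k)_{n ≥ 2}`
(here reindexed by `n ↦ n + 2`). -/
theorem geode_stmt6 (S G H : MvPowerSeries ℕ ℚ)
    (hS : S = 1 + ∑' n : ℕ, (X (n + 1) : MvPowerSeries ℕ ℚ) * S ^ (n + 1))
    (hG : S - 1 = G * ∑' n : ℕ, (X (n + 1) : MvPowerSeries ℕ ℚ))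
    (hH : G = S * H) :
    H * (1 - ∑' n : ℕ, (X (n + 2) : MvPowerSeries ℕ ℚ) *
      ∑ k ∈ Finset.Icc 1 (n + 1), S ^ k) = 1 := by
  classical
  have hsumA : Summable (fun n : ℕ => (X (n + 1) : MvPowerSeries ℕ ℚ) * S ^ (n + 1)) :=
    summable_aux 1 _
  have hsumS1 : Summable (fun n : ℕ => (X (n + 1) : MvPowerSeries ℕ ℚ)) := by
    simpa using summable_aux 1 (fun _ => (1 : MvPowerSeries ℕ ℚ))
  have hsumB : Summable (fun n : ℕ =>
      (X (n + 2) : MvPowerSeries ℕ ℚ) * ∑ k ∈ Finset.Icc 1 (n + 1), S ^ k) :=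
    summable_aux 2 _
  set S1 : MvPowerSeries ℕ ℚ := ∑' n : ℕ, (X (n + 1) : MvPowerSeries ℕ ℚ) with hS1def
  set B : MvPowerSeries ℕ ℚ :=
    ∑' n : ℕ, (X (n + 2) : MvPowerSeries ℕ ℚ) * ∑ k ∈ Finset.Icc 1 (n + 1), S ^ k with hBdef
  have hA : HasSum (fun n : ℕ => (X (n + 1) : MvPowerSeries ℕ ℚ) * S ^ (n + 1)) (S - 1) := by
    have h1 : S - 1 = ∑' n : ℕ, (X (n + 1) : MvPowerSeries ℕ ℚ) * S ^ (n + 1) :=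
      sub_eq_iff_eq_add'.mpr hS
    rw [h1]; exact hsumA.hasSum
  have hS1 : HasSum (fun n : ℕ => (X (n + 1) : MvPowerSeries ℕ ℚ)) S1 := hsumS1.hasSum
  have hB : HasSum (fun n : ℕ =>
      (X (n + 2) : MvPowerSeries ℕ ℚ) * ∑ k ∈ Finset.Icc 1 (n + 1), S ^ k) B := hsumB.hasSum
  -- geometric identity
  have hgeom : ∀ n : ℕ, (S - 1) *
      ((X (n + 2) : MvPowerSeries ℕ ℚ) * ∑ k ∈ Finset.Icc 1 (n + 1), S ^ k)
      = X (n + 2) * S ^ (n + 2) - X (n + 2) * S := by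
    intro n
    have h1 : (∑ k ∈ Finset.Icc 1 (n + 1), S ^ k) = S * ∑ i ∈ Finset.range (n + 1), S ^ i := by
      rw [← Finset.Ico_add_one_right_eq_Icc, Finset.sum_Ico_eq_sum_range]
      simp [pow_add, pow_one, Finset.mul_sum]
    rw [h1]
    have h2 := mul_geom_sum S (n + 1)
    have h3 : (S - 1) * ((X (n + 2) : MvPowerSeries ℕ ℚ) * (S * ∑ i ∈ Finset.range (n + 1), S ^ i))
        = X (n + 2) * S * ((S - 1) * ∑ i ∈ Finset.range (n + 1), S ^ i) := by ring
    rw [h3, h2]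
    ring
  have hC : HasSum (fun n : ℕ =>
      (X (n + 2) : MvPowerSeries ℕ ℚ) * S ^ (n + 2) - X (n + 2) * S) ((S - 1) * B) := by
    have := hasSum_mul_left_mvps (S - 1) hB
    simpa only [hgeom] using this
  have hA1 : HasSum (fun n : ℕ => (X (n + 2) : MvPowerSeries ℕ ℚ) * S ^ (n + 2))
      ((S - 1) - X 1 * S ^ 1) := by
    have h0 : HasSum (fun n : ℕ => (X (n + 1 + 1) : MvPowerSeries ℕ ℚ) * S ^ (n + 1 + 1))
        ((S - 1) - X 1 * S ^ 1) :=
      (hasSum_nat_add_iff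
        (f := fun n : ℕ => (X (n + 1) : MvPowerSeries ℕ ℚ) * S ^ (n + 1)) 1).mpr
        (by simpa using hA)
    simpa using h0
  have hD : HasSum (fun n : ℕ => S * (X (n + 1) : MvPowerSeries ℕ ℚ)) (S * S1) :=
    hasSum_mul_left_mvps S hS1
  have hD1 : HasSum (fun n : ℕ => S * (X (n + 2) : MvPowerSeries ℕ ℚ)) (S * S1 - S * X 1) := by
    have h0 : HasSum (fun n : ℕ => S * (X (n + 1 + 1) : MvPowerSeries ℕ ℚ))
        (S * S1 - S * X 1) :=
      (hasSum_nat_add_iff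
        (f := fun n : ℕ => S * (X (n + 1) : MvPowerSeries ℕ ℚ)) 1).mpr
        (by simpa using hD)
    simpa using h0
  have hSub : HasSum (fun n : ℕ =>
      (X (n + 2) : MvPowerSeries ℕ ℚ) * S ^ (n + 2) - X (n + 2) * S)
      (((S - 1) - X 1 * S ^ 1) - (S * S1 - S * X 1)) := by
    have := hA1.sub hD1
    simpa [mul_comm] using this
  have key : (S - 1) * (1 - B) = S * S1 := by
    have huniq : (S - 1) * B = ((S - 1) - X 1 * S ^ 1) - (S * S1 - S * X 1) := hC.unique hSub
    have : (S - 1) * (1 - B) = (S - 1) - (S - 1) * B := by ring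
    rw [this, huniq]
    ring
  -- S has constant coefficient 1
  have hcS : coeff (0 : ℕ →₀ ℕ) S = 1 := by
    have hA0 : HasSum (fun n : ℕ =>
        coeff (0 : ℕ →₀ ℕ) ((X (n + 1) : MvPowerSeries ℕ ℚ) * S ^ (n + 1)))
        (coeff (0 : ℕ →₀ ℕ) (S - 1)) := hasSum_coeff_iff.mp hA 0
    have hz : ∀ n : ℕ,
        coeff (0 : ℕ →₀ ℕ) ((X (n + 1) : MvPowerSeries ℕ ℚ) * S ^ (n + 1)) = 0 :=
      fun n => coeff_X_mul_eq_zero (by simp)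
    have h0 : coeff (0 : ℕ →₀ ℕ) (S - 1) = 0 := by
      have := (hasSum_zero (α := ℚ) (β := ℕ)).unique (by simpa only [hz] using hA0)
      exact this.symm
    have h1 : coeff (0 : ℕ →₀ ℕ) S - coeff (0 : ℕ →₀ ℕ) (1 : MvPowerSeries ℕ ℚ) = 0 := by
      simpa [map_sub] using h0
    simp only [coeff_zero_eq_constantCoeff, map_one] at h1 ⊢
    linarith
  have hSne : S ≠ 0 := by
    intro h
    rw [h, map_zero] at hcS
    exact one_ne_zero hcS.symm
  -- S1 ≠ 0
  have hS1ne : S1 ≠ 0 := by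
    intro h0
    have h1 : HasSum (fun n : ℕ =>
        coeff (Finsupp.single 1 1) (X (n + 1) : MvPowerSeries ℕ ℚ))
        (coeff (Finsupp.single 1 1) S1) := hasSum_coeff_iff.mp hS1 _
    have h2 : (fun n : ℕ => coeff (Finsupp.single 1 1) (X (n + 1) : MvPowerSeries ℕ ℚ))
        = fun n : ℕ => if n = 0 then (1 : ℚ) else 0 := by
      funext n
      rw [coeff_X]
      by_cases hn : n = 0
      · subst hn; simp
      · rw [if_neg, if_neg hn]
        intro hEq
        have := (Finsupp.single_left_inj (one_ne_zero : (1 : ℕ) ≠ 0)).mp hEq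
        omega
    rw [h2] at h1
    have h3 : HasSum (fun n : ℕ => if n = 0 then (1 : ℚ) else 0) 1 := hasSum_ite_eq 0 1
    have h4 : coeff (Finsupp.single 1 1) S1 = 1 := h1.unique h3
    rw [h0, map_zero] at h4
    exact one_ne_zero h4.symm
  -- final algebra
  have e1 : S1 * (S * (H * (1 - B))) = S1 * (S * 1) := by
    have hSH : S - 1 = S * H * S1 := by rw [hG, hH]
    calc S1 * (S * (H * (1 - B))) = (S * H * S1) * (1 - B) := by ring
      _ = (S - 1) * (1 - B) := by rw [← hSH]
      _ = S * S1 := key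
      _ = S1 * (S * 1) := by ring
  have e2 : S * (H * (1 - B)) = S * 1 := mul_left_cancel₀ hS1ne e1
  have e3 : H * (1 - B) = 1 := mul_left_cancel₀ hSne e2
  simpa using e3
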